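/- arXiv:2001.11918 — 3 statements merged into one kernel-verified Lean document; each statement's English description precedes it below -/
import Mathlib

section
/- Let N ≥ 3 and let L be the N×N Laplacian of the complete (all-to-all connected) graph on N nodes with all rates equal to 1: L_{i j} = 1 for i ≠ j and L_{i i} = −(N−1). Fix two distinct nodes a ≠ b, let S be the N×(N−2) matrix obtained from L by deleting columns a and b, and let Ŝ be S with every column normalized to unit Euclidean length. Then ‖I_{N−2} − Ŝᵀ Ŝ‖_F = √((N−2)(N−3)) / (N−1), so the orthogonality of this scheme is Θ = 1 − √((N−2)(N−3))/(N−1). -/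
open Matrix BigOperators

/-- The Frobenius norm of a real matrix: `‖M‖_F = √(∑ i j, (M i j)²)`. -/
noncomputable def frobeniusNorm {n : Type*} {m : Type*} [Fintype n] [Fintype m]
    (M : Matrix n m ℝ) : ℝ :=
  Real.sqrt (∑ i, ∑ j, (M i j) ^ 2)

lemma sum_ite_one {M : ℕ} (j : Fin M) (A B : ℝ) :
    ∑ i : Fin M, (if i = j then A else B) = A + ((M : ℝ) - 1) * B := by
  have h : ∀ i : Fin M, (if i = j then A else B)
      = B + (if i = j then A - B else 0) := by
    intro i; split <;> ring
  rw [Finset.sum_congr rfl fun i _ => h i, Finset.sum_add_distrib,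
    Finset.sum_const, Finset.sum_ite_eq' Finset.univ j (fun _ => A - B)]
  simp [Finset.card_univ]
  ring

lemma sum_ite_two {M : ℕ} (j k : Fin M) (hjk : j ≠ k) (A B : ℝ) :
    ∑ i : Fin M, (if i = j then A else B) * (if i = k then A else B)
      = 2 * A * B + ((M : ℝ) - 2) * B ^ 2 := by
  have h : ∀ i : Fin M, (if i = j then A else B) * (if i = k then A else B)
      = B ^ 2 + (if i = j then A * B - B ^ 2 else 0)
        + (if i = k then A * B - B ^ 2 else 0) := by
    intro i
    by_cases h1 : i = j <;> by_cases h2 : i = k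
    · exact absurd (h1.symm.trans h2) hjk
    all_goals simp [h1, h2, hjk, Ne.symm hjk] <;> ring
  rw [Finset.sum_congr rfl fun i _ => h i, Finset.sum_add_distrib,
    Finset.sum_add_distrib, Finset.sum_const,
    Finset.sum_ite_eq' Finset.univ j (fun _ => A * B - B ^ 2),
    Finset.sum_ite_eq' Finset.univ k (fun _ => A * B - B ^ 2)]
  simp [Finset.card_univ]
  ring

/-- For the Laplacian `L` of the complete graph on `N ≥ 3` nodes with all rates 1
(`L i j = 1` for `i ≠ j`, `L i i = -(N-1)`), two distinct discriminatory nodes `a ≠ b`,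
`S` the matrix obtained from `L` by deleting columns `a` and `b` (realized via an
injection `g : Fin (N-2) → Fin N` onto the complement of `{a, b}`), and `Ŝ` the
column-normalized `S`, one has `‖I - Ŝᵀ Ŝ‖_F = √((N-2)(N-3)) / (N-1)`, hence the
orthogonality of the scheme is `Θ = 1 - √((N-2)(N-3)) / (N-1)`. -/
theorem complete_graph_orthogonality
    (N : ℕ) (hN : 3 ≤ N) (L : Matrix (Fin N) (Fin N) ℝ)
    (hL : ∀ i j : Fin N, L i j = if i = j then -((N : ℝ) - 1) else 1)
    (a b : Fin N) (hab : a ≠ b)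
    (g : Fin (N - 2) → Fin N) (hg : Function.Injective g)
    (hrange : Set.range g = ({a, b} : Set (Fin N))ᶜ)
    (S : Matrix (Fin N) (Fin (N - 2)) ℝ) (hS : S = L.submatrix id g)
    (Shat : Matrix (Fin N) (Fin (N - 2)) ℝ)
    (hShat : ∀ r c, Shat r c = S r c / Real.sqrt (∑ r', (S r' c) ^ 2)) :
    frobeniusNorm ((1 : Matrix (Fin (N - 2)) (Fin (N - 2)) ℝ) - Shatᵀ * Shat)
      = Real.sqrt (((N : ℝ) - 2) * ((N : ℝ) - 3)) / ((N : ℝ) - 1) := by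
  have hN3 : (3 : ℝ) ≤ (N : ℝ) := by exact_mod_cast hN
  set rN : ℝ := (N : ℝ) with hrN
  have hSe : ∀ r c, S r c = if r = g c then -(rN - 1) else 1 := by
    intro r c; rw [hS]; simp [Matrix.submatrix_apply, hL]
  -- squared norm of each column
  have hsq : ∀ c : Fin (N - 2), ∑ r, (S r c) ^ 2 = rN * (rN - 1) := by
    intro c
    have h : ∀ r : Fin N, (S r c) ^ 2
        = if r = g c then (rN - 1) ^ 2 else 1 := by
      intro r; rw [hSe r c]; split <;> ring
    rw [Finset.sum_congr rfl fun r _ => h r, sum_ite_one]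
    ring
  have hQpos : (0 : ℝ) < rN * (rN - 1) := by nlinarith
  -- cross products of distinct columns
  have hcross : ∀ c d : Fin (N - 2), c ≠ d →
      ∑ r, S r c * S r d = -rN := by
    intro c d hcd
    have hgcd : g c ≠ g d := fun h => hcd (hg h)
    have h : ∀ r : Fin N, S r c * S r d
        = (if r = g c then -(rN - 1) else 1) * (if r = g d then -(rN - 1) else 1) := by
      intro r; rw [hSe r c, hSe r d]
    rw [Finset.sum_congr rfl fun r _ => h r, sum_ite_two _ _ hgcd]
    ring
  -- entries of Shatᵀ * Shat
  have hentry : ∀ c d : Fin (N - 2),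
      (Shatᵀ * Shat) c d = (∑ r, S r c * S r d) / (rN * (rN - 1)) := by
    intro c d
    rw [Matrix.mul_apply]
    have h : ∀ r : Fin N, Shatᵀ c r * Shat r d
        = (S r c * S r d) / (rN * (rN - 1)) := by
      intro r
      rw [Matrix.transpose_apply, hShat, hShat, hsq, hsq]
      rw [div_mul_div_comm, Real.mul_self_sqrt hQpos.le]
    rw [Finset.sum_congr rfl fun r _ => h r, ← Finset.sum_div]
  -- entries of the difference matrix
  set D := (1 : Matrix (Fin (N - 2)) (Fin (N - 2)) ℝ) - Shatᵀ * Shat with hD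
  have hDe : ∀ c d : Fin (N - 2), D c d = if c = d then 0 else 1 / (rN - 1) := by
    intro c d
    rw [hD, Matrix.sub_apply, Matrix.one_apply, hentry]
    by_cases h : c = d
    · subst h
      have h2 : ∑ r, S r c * S r c = rN * (rN - 1) := by
        have := hsq c; simpa [pow_two] using this
      rw [if_pos rfl, if_pos rfl, h2, div_self hQpos.ne']
      ring
    · have hne : rN - 1 ≠ 0 := by linarith
      rw [if_neg h, if_neg h, hcross c d h]
      field_simp
      ring
  -- sum of squares
  have hcard : ((N - 2 : ℕ) : ℝ) = rN - 2 := by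
    have : (2 : ℕ) ≤ N := by omega
    push_cast [Nat.cast_sub this]
    ring
  have hsum : ∑ c, ∑ d, (D c d) ^ 2 = (rN - 2) * (rN - 3) / (rN - 1) ^ 2 := by
    have hinner : ∀ c : Fin (N - 2), ∑ d, (D c d) ^ 2
        = ((rN - 2) - 1) * (1 / (rN - 1)) ^ 2 := by
      intro c
      have h : ∀ d, (D c d) ^ 2 = if d = c then 0 else (1 / (rN - 1)) ^ 2 := by
        intro d
        rw [hDe]
        by_cases h : d = c
        · simp [h]
        · have : ¬ c = d := fun e => h e.symm
          simp [h, this]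
      rw [Finset.sum_congr rfl fun d _ => h d, sum_ite_one, hcard]
      ring
    rw [Finset.sum_congr rfl fun c _ => hinner c, Finset.sum_const,
      Finset.card_univ, Fintype.card_fin, nsmul_eq_mul, hcard]
    field_simp
    ring
  rw [frobeniusNorm, hsum]
  have h1 : (0 : ℝ) ≤ (rN - 2) * (rN - 3) := by nlinarith
  rw [Real.sqrt_div h1, Real.sqrt_sq (by linarith : (0:ℝ) ≤ rN - 1)]
end

section
/- Let N ≥ 4. Let L_line be the N×N Laplacian of the path graph on nodes 0, …, N−1 with all rates 1 (L_{i j} = 1 if |i−j| = 1, diagonal entries making columns sum to zero), and let S_line be L_line with the end columns 0 and N−1 deleted. Let L_all be the N×N Laplacian of the complete graph with all rates 1 (L_{i j} = 1 for i ≠ j, L_{i i} = −(N−1)), and let S_all be L_all with two distinct columns a, b deleted. Then ‖I − Ŝ_lineᵀ Ŝ_line‖_F > ‖I − Ŝ_allᵀ Ŝ_all‖_F; equivalently, the orthogonality of the all-to-all scheme is strictly greater than that of the line scheme. -/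
open Matrix BigOperators

lemma sum_eq_two' {ι : Type*} [Fintype ι] [DecidableEq ι] (f : ι → ℝ) (x y : ι)
    (hxy : x ≠ y) (h0 : ∀ i, i ≠ x → i ≠ y → f i = 0) :
    ∑ i, f i = f x + f y := by
  rw [← Finset.sum_subset (Finset.subset_univ ({x, y} : Finset ι))]
  · rw [Finset.sum_insert (by simp [hxy]), Finset.sum_singleton]
  · intro i _ hi
    simp only [Finset.mem_insert, Finset.mem_singleton, not_or] at hi
    exact h0 i hi.1 hi.2

lemma sum_eq_three' {ι : Type*} [Fintype ι] [DecidableEq ι] (f : ι → ℝ) (x y z : ι)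
    (hxy : x ≠ y) (hxz : x ≠ z) (hyz : y ≠ z) (h0 : ∀ i, i ≠ x → i ≠ y → i ≠ z → f i = 0) :
    ∑ i, f i = f x + f y + f z := by
  rw [← Finset.sum_subset (Finset.subset_univ ({x, y, z} : Finset ι))]
  · rw [Finset.sum_insert (by simp [hxy, hxz]), Finset.sum_insert (by simp [hyz]),
      Finset.sum_singleton]; ring
  · intro i _ hi
    simp only [Finset.mem_insert, Finset.mem_singleton, not_or] at hi
    exact h0 i hi.1 hi.2.1 hi.2.2

lemma sum_shift' {ι : Type*} [Fintype ι] (f : ι → ℝ) (B : ℝ) :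
    ∑ i, f i = (∑ i, (f i - B)) + (Fintype.card ι : ℝ) * B := by
  rw [Finset.sum_sub_distrib, Finset.sum_const, Finset.card_univ]
  simp [nsmul_eq_mul]

/-- For `N ≥ 4`: let `Lline` be the Laplacian of the path graph on nodes `0, …, N-1` with
all rates 1 and `Sline` its submatrix with end columns `0` and `N-1` deleted (via the map
`h c = c + 1`); let `Lall` be the Laplacian of the complete graph with all rates 1 and
`Sall` its submatrix with two distinct columns `a, b` deleted (via an injection `g` onto
the complement of `{a, b}`).  With `Ŝ` denoting column normalization,
`‖I - Ŝlineᵀ Ŝline‖_F > ‖I - Ŝallᵀ Ŝall‖_F`: the all-to-all scheme has strictly greater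
orthogonality than the line scheme. -/
theorem line_less_orthogonal_than_complete
    (N : ℕ) (hN : 4 ≤ N)
    (Lline Lall : Matrix (Fin N) (Fin N) ℝ)
    (hLline : ∀ i j : Fin N, Lline i j =
      if (i.val : ℤ) - (j.val : ℤ) = 1 ∨ (j.val : ℤ) - (i.val : ℤ) = 1 then 1
      else if i = j then -(if i.val = 0 ∨ i.val = N - 1 then (1 : ℝ) else 2)
      else 0)
    (hLall : ∀ i j : Fin N, Lall i j = if i = j then -((N : ℝ) - 1) else 1)
    (a b : Fin N) (hab : a ≠ b)
    (g : Fin (N - 2) → Fin N) (hg : Function.Injective g)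
    (hrange : Set.range g = ({a, b} : Set (Fin N))ᶜ)
    (h : Fin (N - 2) → Fin N) (hh : ∀ c, (h c).val = c.val + 1)
    (Sline Sall : Matrix (Fin N) (Fin (N - 2)) ℝ)
    (hSline : Sline = Lline.submatrix id h)
    (hSall : Sall = Lall.submatrix id g)
    (Slinehat Sallhat : Matrix (Fin N) (Fin (N - 2)) ℝ)
    (hSlinehat : ∀ r c, Slinehat r c = Sline r c / Real.sqrt (∑ r', (Sline r' c) ^ 2))
    (hSallhat : ∀ r c, Sallhat r c = Sall r c / Real.sqrt (∑ r', (Sall r' c) ^ 2)) :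
    frobeniusNorm ((1 : Matrix (Fin (N - 2)) (Fin (N - 2)) ℝ) - Slinehatᵀ * Slinehat)
      > frobeniusNorm ((1 : Matrix (Fin (N - 2)) (Fin (N - 2)) ℝ) - Sallhatᵀ * Sallhat) := by
  have hx : (4:ℝ) ≤ (N:ℝ) := by exact_mod_cast hN
  have hcardN : ((Fintype.card (Fin N) : ℕ) : ℝ) = (N:ℝ) := by simp
  have hcardm : ((Fintype.card (Fin (N-2)) : ℕ) : ℝ) = (N:ℝ) - 2 := by
    rw [Fintype.card_fin, Nat.cast_sub (by omega)]; norm_num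
  -- ==================== complete graph side ====================
  have hSall' : ∀ (i : Fin N) (c : Fin (N-2)),
      Sall i c = if i = g c then -((N:ℝ)-1) else 1 := by
    intro i c
    rw [hSall]
    simp only [Matrix.submatrix_apply, id_eq]
    rw [hLall]
  have hnpos : (0:ℝ) < (N:ℝ)^2 - (N:ℝ) := by nlinarith
  have hnall : ∀ c : Fin (N-2), ∑ r', (Sall r' c)^2 = (N:ℝ)^2 - (N:ℝ) := by
    intro c
    rw [sum_shift' (fun r' => (Sall r' c)^2) 1]
    have e : ∑ i, ((Sall i c)^2 - 1) = (Sall (g c) c)^2 - 1 := by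
      apply Finset.sum_eq_single_of_mem _ (Finset.mem_univ _)
      intro i _ hi
      rw [hSall' i c, if_neg hi]; ring
    rw [e, hSall' (g c) c, if_pos rfl, hcardN]; ring
  have hipall : ∀ c d : Fin (N-2), c ≠ d →
      ∑ i, Sall i c * Sall i d = -(N:ℝ) := by
    intro c d hcd
    have hgcd : g c ≠ g d := fun e => hcd (hg e)
    rw [sum_shift' (fun i => Sall i c * Sall i d) 1]
    have e : ∑ i, (Sall i c * Sall i d - 1)
        = (Sall (g c) c * Sall (g c) d - 1) + (Sall (g d) c * Sall (g d) d - 1) := by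
      apply sum_eq_two' _ (g c) (g d) hgcd
      intro i h1 h2
      rw [hSall' i c, hSall' i d, if_neg h1, if_neg h2]; ring
    rw [e, hSall' (g c) c, hSall' (g c) d, hSall' (g d) c, hSall' (g d) d,
      if_pos rfl, if_neg hgcd, if_neg (Ne.symm hgcd), if_pos rfl, hcardN]
    ring
  have hhatall : ∀ c d : Fin (N-2), (Sallhatᵀ * Sallhat) c d
      = (∑ i, Sall i c * Sall i d) / ((N:ℝ)^2 - (N:ℝ)) := by
    intro c d
    rw [Matrix.mul_apply, Finset.sum_div]
    refine Finset.sum_congr rfl fun i _ => ?_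
    rw [Matrix.transpose_apply, hSallhat, hSallhat, hnall, hnall,
      div_mul_div_comm, Real.mul_self_sqrt (le_of_lt hnpos)]
  have hTall : ∀ c d : Fin (N-2),
      ((1 : Matrix (Fin (N-2)) (Fin (N-2)) ℝ) - Sallhatᵀ * Sallhat) c d
      = if c = d then 0 else 1/((N:ℝ)-1) := by
    intro c d
    rw [Matrix.sub_apply, hhatall]
    by_cases hcd : c = d
    · subst hcd
      rw [if_pos rfl, Matrix.one_apply_eq]
      have : ∑ i, Sall i c * Sall i c = (N:ℝ)^2 - (N:ℝ) := by
        rw [← hnall c]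
        exact Finset.sum_congr rfl fun i _ => (sq (Sall i c)).symm
      rw [this, div_self (ne_of_gt hnpos)]; ring
    · rw [if_neg hcd, Matrix.one_apply_ne hcd, hipall c d hcd]
      have h1 : (N:ℝ) - 1 ≠ 0 := by nlinarith
      have h2 : (N:ℝ) ≠ 0 := by nlinarith
      field_simp
      ring
  have hfroball : ∑ c, ∑ d,
      (((1 : Matrix (Fin (N-2)) (Fin (N-2)) ℝ) - Sallhatᵀ * Sallhat) c d)^2
      = ((N:ℝ)-2) * (((N:ℝ)-3) * (1/(((N:ℝ)-1)^2))) := by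
    have inner : ∀ c : Fin (N-2), ∑ d,
        (((1 : Matrix (Fin (N-2)) (Fin (N-2)) ℝ) - Sallhatᵀ * Sallhat) c d)^2
        = ((N:ℝ)-3) * (1/(((N:ℝ)-1)^2)) := by
      intro c
      rw [sum_shift' _ (1/(((N:ℝ)-1)^2))]
      have e : ∑ d, ((((1 : Matrix (Fin (N-2)) (Fin (N-2)) ℝ) - Sallhatᵀ * Sallhat) c d)^2
            - 1/(((N:ℝ)-1)^2))
          = (((1 : Matrix (Fin (N-2)) (Fin (N-2)) ℝ) - Sallhatᵀ * Sallhat) c c)^2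
            - 1/(((N:ℝ)-1)^2) := by
        apply Finset.sum_eq_single_of_mem _ (Finset.mem_univ _)
        intro d _ hdc
        rw [hTall c d, if_neg (fun e => hdc e.symm)]
        rw [div_pow, one_pow]; ring
      rw [e, hTall c c, if_pos rfl, hcardm]; ring
    rw [Finset.sum_congr rfl fun c _ => inner c, Finset.sum_const, Finset.card_univ,
      nsmul_eq_mul, hcardm]
  -- ==================== line graph side ====================
  have key : ∀ (i : Fin N) (c : Fin (N-2)), Sline i c =
      if i.val = c.val then 1 else if i.val = c.val + 1 then -2
      else if i.val = c.val + 2 then 1 else 0 := by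
    intro i c
    have hcv : c.val < N - 2 := c.isLt
    have hhc := hh c
    rw [hSline]
    simp only [Matrix.submatrix_apply, id_eq]
    rw [hLline]
    by_cases h1 : i.val = c.val
    · rw [if_pos (Or.inr (by omega)), if_pos h1]
    · by_cases h2 : i.val = c.val + 1
      · rw [if_neg (by omega), if_pos (by rw [Fin.ext_iff, hhc]; exact h2),
          if_neg (by omega), if_neg h1, if_pos h2]
      · by_cases h3 : i.val = c.val + 2
        · rw [if_pos (Or.inl (by omega)), if_neg h1, if_neg h2, if_pos h3]
        · rw [if_neg (by omega),
            if_neg (fun e => h2 (by rw [Fin.ext_iff, hhc] at e; exact e)),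
            if_neg h1, if_neg h2, if_neg h3]
  have hnline : ∀ c : Fin (N-2), ∑ r', (Sline r' c)^2 = 6 := by
    intro c
    have hcv : c.val < N - 2 := c.isLt
    rw [sum_eq_three' (fun r' => (Sline r' c)^2)
      ⟨c.val, by omega⟩ ⟨c.val+1, by omega⟩ ⟨c.val+2, by omega⟩
      (by simp [Fin.ext_iff]) (by simp [Fin.ext_iff]) (by simp [Fin.ext_iff])]
    · rw [key, key, key]
      simp only [Fin.ext_iff] at *
      norm_num
    · intro i h1 h2 h3
      have h1' : i.val ≠ c.val := fun e => h1 (Fin.ext e)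
      have h2' : i.val ≠ c.val + 1 := fun e => h2 (Fin.ext e)
      have h3' : i.val ≠ c.val + 2 := fun e => h3 (Fin.ext e)
      rw [key, if_neg h1', if_neg h2', if_neg h3']
      norm_num
  have hipline : ∀ (c d : Fin (N-2)), d.val = c.val + 1 →
      ∑ i, Sline i c * Sline i d = -4 := by
    intro c d hd
    have hdv : d.val < N - 2 := d.isLt
    rw [sum_eq_two' (fun i => Sline i c * Sline i d)
      ⟨c.val+1, by omega⟩ ⟨c.val+2, by omega⟩ (by simp [Fin.ext_iff])]
    · rw [key, key, key, key]
      simp only [hd]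
      norm_num
    · intro i h1 h2
      have h1' : i.val ≠ c.val + 1 := fun e => h1 (Fin.ext e)
      have h2' : i.val ≠ c.val + 2 := fun e => h2 (Fin.ext e)
      rw [key, key, hd]
      split_ifs <;> first | omega | norm_num
  have hTline : ∀ (c d : Fin (N-2)), d.val = c.val + 1 →
      ((1 : Matrix (Fin (N-2)) (Fin (N-2)) ℝ) - Slinehatᵀ * Slinehat) c d = 2/3 := by
    intro c d hd
    have hcd : c ≠ d := by
      intro e; rw [e] at hd; omega
    rw [Matrix.sub_apply, Matrix.one_apply_ne hcd, Matrix.mul_apply]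
    have e : (∑ i, Slinehatᵀ c i * Slinehat i d) = (∑ i, Sline i c * Sline i d) / 6 := by
      rw [Finset.sum_div]
      refine Finset.sum_congr rfl fun i _ => ?_
      rw [Matrix.transpose_apply, hSlinehat, hSlinehat, hnline, hnline,
        div_mul_div_comm, Real.mul_self_sqrt (by norm_num)]
    rw [e, hipline c d hd]
    norm_num
  -- lower bound on the line Frobenius sum
  have step1 : ∀ c : Fin (N-2), (if c.val + 1 < N-2 then (4/9:ℝ) else 0)
      ≤ ∑ d, (((1 : Matrix (Fin (N-2)) (Fin (N-2)) ℝ) - Slinehatᵀ * Slinehat) c d)^2 := by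
    intro c
    by_cases hc : c.val + 1 < N-2
    · rw [if_pos hc]
      have hs := Finset.single_le_sum
        (f := fun d => (((1 : Matrix (Fin (N-2)) (Fin (N-2)) ℝ) - Slinehatᵀ * Slinehat) c d)^2)
        (fun d _ => sq_nonneg _) (Finset.mem_univ (⟨c.val+1, hc⟩ : Fin (N-2)))
      calc (4/9:ℝ)
          = (((1 : Matrix (Fin (N-2)) (Fin (N-2)) ℝ) - Slinehatᵀ * Slinehat) c ⟨c.val+1, hc⟩)^2 := by
            rw [hTline c ⟨c.val+1, hc⟩ rfl]; norm_num
        _ ≤ _ := hs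
    · rw [if_neg hc]
      exact Finset.sum_nonneg fun d _ => sq_nonneg _
  have step2 : ∑ c : Fin (N-2), (if c.val + 1 < N-2 then (4/9:ℝ) else 0)
      = ((N:ℝ)-3) * (4/9) := by
    rw [Fin.sum_univ_eq_sum_range (fun i => if i + 1 < N-2 then (4/9:ℝ) else 0) (N-2)]
    rw [← Finset.sum_subset (Finset.range_subset_range.mpr (by omega : N-2-1 ≤ N-2))]
    · rw [Finset.sum_congr rfl (fun i hi => if_pos (by
        simp only [Finset.mem_range] at hi; omega)),
        Finset.sum_const, Finset.card_range, nsmul_eq_mul]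
      have : N - 2 - 1 = N - 3 := by omega
      rw [this, Nat.cast_sub (by omega)]
      norm_num
    · intro i hi hni
      simp only [Finset.mem_range] at hi hni
      rw [if_neg (by omega)]
  have hlineLB : ((N:ℝ)-3) * (4/9)
      ≤ ∑ c, ∑ d, (((1 : Matrix (Fin (N-2)) (Fin (N-2)) ℝ) - Slinehatᵀ * Slinehat) c d)^2 := by
    rw [← step2]
    exact Finset.sum_le_sum fun c _ => step1 c
  -- ==================== conclusion ====================
  have key2 : ((N:ℝ)-2) * (((N:ℝ)-3) * (1/(((N:ℝ)-1)^2))) < ((N:ℝ)-3) * (4/9) := by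
    have h1 : (0:ℝ) < ((N:ℝ)-1)^2 := by nlinarith
    have e : ((N:ℝ)-2) * (((N:ℝ)-3) * (1/(((N:ℝ)-1)^2)))
        = (((N:ℝ)-2) * ((N:ℝ)-3)) / (((N:ℝ)-1)^2) := by ring
    rw [e, div_lt_iff₀ h1]
    have h4 : (0:ℝ) ≤ (N:ℝ) - 4 := by linarith
    nlinarith [mul_nonneg h4 (sq_nonneg ((N:ℝ) - 13/8)), sq_nonneg ((N:ℝ) - 13/8)]
  rw [gt_iff_lt, frobeniusNorm, frobeniusNorm]
  apply Real.sqrt_lt_sqrt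
    (Finset.sum_nonneg fun c _ => Finset.sum_nonneg fun d _ => sq_nonneg _)
  calc ∑ c, ∑ d, (((1 : Matrix (Fin (N-2)) (Fin (N-2)) ℝ) - Sallhatᵀ * Sallhat) c d)^2
      = ((N:ℝ)-2) * (((N:ℝ)-3) * (1/(((N:ℝ)-1)^2))) := hfroball
    _ < ((N:ℝ)-3) * (4/9) := key2
    _ ≤ _ := hlineLB
end

section
/- Fix r > 0 and let L be the 4×4 Laplacian of the fully connected graph on nodes 1,2,3,4 in which the edges 1–2, 2–3, 3–4 carry bidirectional rate r and the edges 1–3, 1–4, 2–4 carry bidirectional rate 1 (diagonal entries set so that every column sums to zero). Let S be L with columns 1 and 4 deleted and Ŝ the column-normalized S. Then ‖I₂ − Ŝᵀ Ŝ‖_F = 2√2 · r² / (3r² + 2r + 1), so the orthogonality Θ(r) = 1 − 2√2 r²/(3r²+2r+1) is a strictly decreasing function of r on (0, ∞). -/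
open Matrix BigOperators

/-- For the 4×4 Laplacian of the fully connected toy network in which the path edges
1–2, 2–3, 3–4 carry bidirectional rate `r > 0` and the edges 1–3, 1–4, 2–4 carry rate 1
(diagonal entries making all columns sum to zero), with `S` the matrix of the two middle
columns and `Ŝ` its column normalization:
`‖I₂ - Ŝᵀ Ŝ‖_F = 2 √2 r² / (3r² + 2r + 1)`, and the orthogonality
`Θ(r) = 1 - 2 √2 r² / (3r² + 2r + 1)` is strictly decreasing on `(0, ∞)`. -/
theorem four_node_orthogonality
    (r : ℝ) (hr : 0 < r)
    (L : Matrix (Fin 4) (Fin 4) ℝ)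
    (hL : L = !![-(r + 2), r, 1, 1;
                 r, -(2 * r + 1), r, 1;
                 1, r, -(2 * r + 1), r;
                 1, 1, r, -(r + 2)])
    (S : Matrix (Fin 4) (Fin 2) ℝ) (hS : S = L.submatrix id ![1, 2])
    (Shat : Matrix (Fin 4) (Fin 2) ℝ)
    (hShat : ∀ ro c, Shat ro c = S ro c / Real.sqrt (∑ r', (S r' c) ^ 2)) :
    frobeniusNorm ((1 : Matrix (Fin 2) (Fin 2) ℝ) - Shatᵀ * Shat)
        = 2 * Real.sqrt 2 * r ^ 2 / (3 * r ^ 2 + 2 * r + 1)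
      ∧ StrictAntiOn
          (fun t : ℝ => 1 - 2 * Real.sqrt 2 * t ^ 2 / (3 * t ^ 2 + 2 * t + 1))
          (Set.Ioi 0) := by
  subst hL
  constructor
  · set Q : ℝ := 6 * r ^ 2 + 4 * r + 2 with hQdef
    have hQpos : (0:ℝ) < Q := by positivity
    set N : ℝ := Real.sqrt Q with hNdef
    have hNN : N * N = Q := Real.mul_self_sqrt hQpos.le
    have hNpos : 0 < N := Real.sqrt_pos.2 hQpos
    have hQ0 : (∑ r' : Fin 4, S r' 0 ^ 2) = Q := by
      rw [hS]; simp [Fin.sum_univ_four, Matrix.submatrix_apply]; ring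
    have hQ1 : (∑ r' : Fin 4, S r' 1 ^ 2) = Q := by
      rw [hS]; simp [Fin.sum_univ_four, Matrix.submatrix_apply]; ring
    have hSh : ∀ i c, Shat i c = S i c / N := by
      intro i c
      rw [hShat]
      congr 2
      fin_cases c
      · exact hQ0
      · exact hQ1
    have hdot : ∀ i j : Fin 2, (Shatᵀ * Shat) i j = (∑ k, S k i * S k j) / Q := by
      intro i j
      rw [Matrix.mul_apply]
      simp only [Matrix.transpose_apply, hSh, div_mul_div_comm, hNN]
      rw [← Finset.sum_div]
    have hd00 : (∑ k, S k 0 * S k 0) = Q := by rw [← hQ0]; congr 1; ext k; ring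
    have hd11 : (∑ k, S k 1 * S k 1) = Q := by rw [← hQ1]; congr 1; ext k; ring
    have hd01 : (∑ k, S k 0 * S k 1) = -(4 * r ^ 2) := by
      rw [hS]; simp [Fin.sum_univ_four, Matrix.submatrix_apply]; ring
    have hd10 : (∑ k, S k 1 * S k 0) = -(4 * r ^ 2) := by
      rw [← hd01]; congr 1; ext k; ring
    have hM : ∀ i j : Fin 2,
        ((1 : Matrix (Fin 2) (Fin 2) ℝ) - Shatᵀ * Shat) i j
          = if i = j then 0 else 4 * r ^ 2 / Q := by
      intro i j
      rw [Matrix.sub_apply, hdot]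
      fin_cases i <;> fin_cases j <;>
        simp [Matrix.one_apply, hd00, hd01, hd10, hd11, hQpos.ne', neg_div]
    unfold frobeniusNorm
    rw [Fin.sum_univ_two, Fin.sum_univ_two, Fin.sum_univ_two, hM, hM, hM, hM]
    norm_num
    have h1 : (4 * r ^ 2 / Q) ^ 2 + (4 * r ^ 2 / Q) ^ 2 = 2 * (4 * r ^ 2 / Q) ^ 2 := by ring
    rw [h1, Real.sqrt_mul (by norm_num), Real.sqrt_sq (by positivity)]
    have h6 : (6 * r ^ 2 + 4 * r + 2 : ℝ) ≠ 0 := by positivity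
    have h3 : (3 * r ^ 2 + 2 * r + 1 : ℝ) ≠ 0 := by positivity
    rw [hQdef]
    field_simp
    ring
  · intro a ha b hb hab
    simp only [Set.mem_Ioi] at ha hb
    have h2 : (0:ℝ) < Real.sqrt 2 := by positivity
    have hda : (0:ℝ) < 3 * a ^ 2 + 2 * a + 1 := by positivity
    have hdb : (0:ℝ) < 3 * b ^ 2 + 2 * b + 1 := by positivity
    simp only
    have : 2 * Real.sqrt 2 * a ^ 2 / (3 * a ^ 2 + 2 * a + 1)
        < 2 * Real.sqrt 2 * b ^ 2 / (3 * b ^ 2 + 2 * b + 1) := by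
      rw [div_lt_div_iff₀ hda hdb]
      nlinarith [mul_pos h2 (show (0:ℝ) < (b - a) * (2 * a * b + a + b) from mul_pos (sub_pos.2 hab) (by positivity))]
    linarith
end
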